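/- Let F be a linearly ordered field, A a magnitude of F, a ∈ F, and suppose the coset α = a + A is zeroless, i.e. 0 ∉ a + A. Then a ≠ 0 and for every x ∈ A and every natural number n, n·|x| ≤ |a| (equivalently, every element of a⁻¹ • A is infinitesimal). -/

import Mathlib

open Pointwise

/-- A *magnitude* of a linearly ordered field `F` is an order-convex additive subgroup of `F`,
given as a set: it contains `0`, is closed under addition and negation, and is order-convex. -/
def IsMagnitude {F : Type*} [Field F] [LinearOrder F] [IsStrictOrderedRing F] (A : Set F) : Prop :=
  (0 : F) ∈ A ∧ (∀ x ∈ A, ∀ y ∈ A, x + y ∈ A) ∧ (∀ x ∈ A, -x ∈ A) ∧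
    (∀ x ∈ A, ∀ y ∈ A, ∀ z : F, x ≤ z → z ≤ y → z ∈ A)

/-- Order relation on subsets of `F`: `S ≤ T` iff every element of `S` is below some element of `T`. -/
def SetLE {F : Type*} [Field F] [LinearOrder F] [IsStrictOrderedRing F] (S T : Set F) : Prop :=
  ∀ x ∈ S, ∃ y ∈ T, x ≤ y

theorem zeroless_coset_infinitesimal_ratio {F : Type*} [Field F] [LinearOrder F] [IsStrictOrderedRing F]
    (A : Set F) (hA : IsMagnitude A) (a : F) (hzl : (0 : F) ∉ ({a} + A)) :
    a ≠ 0 ∧ ∀ x ∈ A, ∀ n : ℕ, (n : F) * |x| ≤ |a| := by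
  obtain ⟨h0, hadd, hneg, hconv⟩ := hA
  have hna : -a ∉ A := by
    intro h
    exact hzl ⟨a, rfl, -a, h, by ring⟩
  constructor
  · rintro rfl
    exact hna (by simpa using h0)
  · intro x hx n
    have habs : |x| ∈ A := by
      rcases abs_cases x with ⟨h, _⟩ | ⟨h, _⟩
      · rwa [h]
      · rw [h]; exact hneg x hx
    have hmul : (n : F) * |x| ∈ A := by
      induction n with
      | zero => simpa using h0
      | succ k ih =>
        have : ((k : F) + 1) * |x| = (k : F) * |x| + |x| := by ring
        rw [Nat.cast_succ, this]
        exact hadd _ ih _ habs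
    by_contra h
    push_neg at h
    apply hna
    refine hconv _ (hneg _ hmul) _ hmul (-a) ?_ ?_
    · linarith [le_abs_self a]
    · linarith [neg_le_abs a]
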